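/- The mixed braid group MBr₃ = ρ⁻¹(⟨(0 2)⟩) equals the subgroup of Br₃ generated (as a subgroup, i.e. Subgroup.closure) by the three elements a², b², and a·b·a. -/

import Mathlib

/-- The single braid relation `a·b·a·(b·a·b)⁻¹` on two generators. -/
def braidRels : Set (FreeGroup (Fin 2)) :=
  {FreeGroup.of 0 * FreeGroup.of 1 * FreeGroup.of 0 *
    (FreeGroup.of 1 * FreeGroup.of 0 * FreeGroup.of 1)⁻¹}

/-- The braid group on three strings, `Br₃ = ⟨a, b | a·b·a = b·a·b⟩`. -/
abbrev Br3 : Type := PresentedGroup braidRels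

/-- The first generator `a` of `Br₃`. -/
def braidA : Br3 := PresentedGroup.of 0

/-- The second generator `b` of `Br₃`. -/
def braidB : Br3 := PresentedGroup.of 1

/-- The images `σ = (swap 0 1, swap 1 2)` of the generators in `Sym₃`. -/
def braidSigma : Fin 2 → Equiv.Perm (Fin 3) := ![Equiv.swap 0 1, Equiv.swap 1 2]

theorem braidRels_hold : ∀ r ∈ braidRels, FreeGroup.lift braidSigma r = 1 := by
  intro r hr
  rw [braidRels, Set.mem_singleton_iff] at hr
  subst hr
  simp only [map_mul, map_inv, FreeGroup.lift_apply_of, braidSigma, Matrix.cons_val_zero,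
    Matrix.cons_val_one, Matrix.head_cons]
  decide

/-- The natural homomorphism `ρ : Br₃ → Sym₃` sending `a ↦ (0 1)` and `b ↦ (1 2)`. -/
def braidRho : Br3 →* Equiv.Perm (Fin 3) := PresentedGroup.toGroup braidRels_hold

lemma braid_rel : braidA * braidB * braidA = braidB * braidA * braidB := by
  have h : (FreeGroup.of 0 * FreeGroup.of 1 * FreeGroup.of 0 *
      (FreeGroup.of 1 * FreeGroup.of 0 * FreeGroup.of 1)⁻¹ : FreeGroup (Fin 2)) ∈
      Subgroup.normalClosure braidRels :=
    Subgroup.subset_normalClosure rfl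
  have : (QuotientGroup.mk (FreeGroup.of 0 * FreeGroup.of 1 * FreeGroup.of 0) : Br3) =
      QuotientGroup.mk (FreeGroup.of 1 * FreeGroup.of 0 * FreeGroup.of 1) := by
    rw [QuotientGroup.eq]
    have h' := (Subgroup.normalClosure braidRels).inv_mem h
    have := Subgroup.Normal.conj_mem (Subgroup.normalClosure_normal)
      _ h' (FreeGroup.of 0 * FreeGroup.of 1 * FreeGroup.of 0)⁻¹
    simpa [mul_assoc] using this
  exact this

lemma rho_a : braidRho braidA = Equiv.swap 0 1 := PresentedGroup.toGroup.of braidRels_hold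

lemma rho_b : braidRho braidB = Equiv.swap 1 2 := PresentedGroup.toGroup.of braidRels_hold

lemma mem_two {π : Equiv.Perm (Fin 3)}
    (h : π ∈ Subgroup.closure {Equiv.swap (0 : Fin 3) 2}) :
    π = 1 ∨ π = Equiv.swap 0 2 := by
  rw [Subgroup.mem_closure_singleton] at h
  obtain ⟨n, rfl⟩ := h
  have h2 : (Equiv.swap (0 : Fin 3) 2) ^ (2 : ℤ) = 1 := by decide
  have : Equiv.swap (0 : Fin 3) 2 ^ n = Equiv.swap (0 : Fin 3) 2 ^ (n % 2) := by
    conv_lhs => rw [← Int.emod_add_mul_ediv n 2]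
    rw [zpow_add, zpow_mul, h2, one_zpow, mul_one]
  rw [this]
  have : n % 2 = 0 ∨ n % 2 = 1 := Int.emod_two_eq n
  rcases this with h | h <;> rw [h] <;> simp

abbrev braidK : Subgroup Br3 :=
  Subgroup.closure {braidA ^ 2, braidB ^ 2, braidA * braidB * braidA}

lemma hX : braidA ^ 2 ∈ braidK := Subgroup.subset_closure (by simp)
lemma hY : braidB ^ 2 ∈ braidK := Subgroup.subset_closure (by simp)
lemma hZ : braidA * braidB * braidA ∈ braidK := Subgroup.subset_closure (by simp)

lemma haba : braidA * braidB * braidA⁻¹ ∈ braidK := by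
  have h := mul_mem hZ (inv_mem hX)
  have e : braidA * braidB * braidA * (braidA ^ 2)⁻¹ = braidA * braidB * braidA⁻¹ := by group
  rwa [e] at h

lemma hbab : braidB * braidA * braidB⁻¹ ∈ braidK := by
  have h := mul_mem hZ (inv_mem hY)
  rw [braid_rel] at h
  have e : braidB * braidA * braidB * (braidB ^ 2)⁻¹ = braidB * braidA * braidB⁻¹ := by group
  rwa [e] at h

lemma of_cases (i : Fin 2) :
    (PresentedGroup.of i : Br3) = braidA ∨ (PresentedGroup.of i : Br3) = braidB := by
  fin_cases i
  · exact Or.inl rfl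
  · exact Or.inr rfl

lemma cover (g : Br3) :
    g ∈ braidK ∨ g * braidA⁻¹ ∈ braidK ∨ g * braidB⁻¹ ∈ braidK := by
  have ht : g ∈ Subgroup.closure (Set.range (PresentedGroup.of : Fin 2 → Br3)) := by
    rw [PresentedGroup.closure_range_of]; trivial
  refine Subgroup.closure_induction_right
    (p := fun x _ => x ∈ braidK ∨ x * braidA⁻¹ ∈ braidK ∨ x * braidB⁻¹ ∈ braidK)
    (Or.inl (one_mem _)) ?_ ?_ ht
  · rintro y _ x ⟨i, rfl⟩ ih
    rcases of_cases i with hi | hi <;> rw [hi]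
    · -- multiply by a
      rcases ih with h | h | h
      · refine Or.inr (Or.inl ?_)
        have e : y * braidA * braidA⁻¹ = y := by group
        rw [e]; exact h
      · refine Or.inl ?_
        have e : y * braidA = (y * braidA⁻¹) * braidA ^ 2 := by group
        rw [e]; exact mul_mem h hX
      · refine Or.inr (Or.inr ?_)
        have e : y * braidA * braidB⁻¹ = (y * braidB⁻¹) * (braidB * braidA * braidB⁻¹) := by group
        rw [e]; exact mul_mem h hbab
    · -- multiply by b
      rcases ih with h | h | h
      · refine Or.inr (Or.inr ?_)
        have e : y * braidB * braidB⁻¹ = y := by group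
        rw [e]; exact h
      · refine Or.inr (Or.inl ?_)
        have e : y * braidB * braidA⁻¹ = (y * braidA⁻¹) * (braidA * braidB * braidA⁻¹) := by group
        rw [e]; exact mul_mem h haba
      · refine Or.inl ?_
        have e : y * braidB = (y * braidB⁻¹) * braidB ^ 2 := by group
        rw [e]; exact mul_mem h hY
  · rintro y _ x ⟨i, rfl⟩ ih
    rcases of_cases i with hi | hi <;> rw [hi]
    · -- multiply by a⁻¹
      rcases ih with h | h | h
      · refine Or.inr (Or.inl ?_)
        have e : y * braidA⁻¹ * braidA⁻¹ = y * (braidA ^ 2)⁻¹ := by group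
        rw [e]; exact mul_mem h (inv_mem hX)
      · exact Or.inl h
      · refine Or.inr (Or.inr ?_)
        have e : y * braidA⁻¹ * braidB⁻¹ =
            (y * braidB⁻¹) * (braidB * braidA * braidB⁻¹)⁻¹ := by group
        rw [e]
        exact mul_mem h (inv_mem hbab)
    · -- multiply by b⁻¹
      rcases ih with h | h | h
      · refine Or.inr (Or.inr ?_)
        have e : y * braidB⁻¹ * braidB⁻¹ = y * (braidB ^ 2)⁻¹ := by group
        rw [e]; exact mul_mem h (inv_mem hY)
      · refine Or.inr (Or.inl ?_)
        have e : y * braidB⁻¹ * braidA⁻¹ =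
            (y * braidA⁻¹) * (braidA * braidB * braidA⁻¹)⁻¹ := by group
        rw [e]
        exact mul_mem h (inv_mem haba)
      · exact Or.inl h

lemma K_le : braidK ≤ Subgroup.comap braidRho
    (Subgroup.closure {Equiv.swap (0 : Fin 3) 2}) := by
  rw [Subgroup.closure_le]
  rintro x (rfl | rfl | rfl) <;> simp only [SetLike.mem_coe, Subgroup.mem_comap]
  ·
    rw [map_pow, rho_a, show (Equiv.swap (0:Fin 3) 1) ^ 2 = 1 by decide]
    exact one_mem _
  ·
    rw [map_pow, rho_b, show (Equiv.swap (1:Fin 3) 2) ^ 2 = 1 by decide]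
    exact one_mem _
  ·
    rw [map_mul, map_mul, rho_a, rho_b,
      show Equiv.swap (0:Fin 3) 1 * Equiv.swap 1 2 * Equiv.swap 0 1 = Equiv.swap 0 2 by decide]
    exact Subgroup.subset_closure rfl

/-- The mixed braid group `MBr₃ = ρ⁻¹(⟨(0 2)⟩)` equals the subgroup of `Br₃` generated
by the three elements `a²`, `b²` and `a·b·a`. -/
theorem comap_rho_eq_closure_mixed :
    Subgroup.comap braidRho (Subgroup.closure {Equiv.swap (0 : Fin 3) 2}) =
      Subgroup.closure {braidA ^ 2, braidB ^ 2, braidA * braidB * braidA} := by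
  refine le_antisymm ?_ K_le
  intro g hg
  rcases cover g with h | h | h
  · exact h
  · exfalso
    have h1 : braidRho (g * braidA⁻¹) ∈ Subgroup.closure {Equiv.swap (0 : Fin 3) 2} := K_le h
    have h2 : braidRho braidA ∈ Subgroup.closure {Equiv.swap (0 : Fin 3) 2} := by
      have := mul_mem (inv_mem h1) hg
      rwa [← map_inv, ← map_mul, show (g * braidA⁻¹)⁻¹ * g = braidA by group] at this
    rw [rho_a] at h2
    rcases mem_two h2 with h3 | h3 <;> exact absurd h3 (by decide)
  · exfalso
    have h1 : braidRho (g * braidB⁻¹) ∈ Subgroup.closure {Equiv.swap (0 : Fin 3) 2} := K_le h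
    have h2 : braidRho braidB ∈ Subgroup.closure {Equiv.swap (0 : Fin 3) 2} := by
      have := mul_mem (inv_mem h1) hg
      rwa [← map_inv, ← map_mul, show (g * braidB⁻¹)⁻¹ * g = braidB by group] at this
    rw [rho_b] at h2
    rcases mem_two h2 with h3 | h3 <;> exact absurd h3 (by decide)
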